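/- Let u ∈ R satisfy u ≡ 1 (mod m), where m = (t) is the maximal ideal of R. Then u is a fifth power in R (there exists y ∈ R with y⁵ = u) if and only if u ≡ 1 (mod m³). -/

import Mathlib

open Polynomial

instance : Fact (Nat.Prime 5) := ⟨by norm_num⟩

/-- `R = ℤ₅[X]/(X² - 10)`, i.e. `ℤ₅` with a square root of `10` adjoined. -/
noncomputable abbrev R : Type := AdjoinRoot ((X : Polynomial ℤ_[5]) ^ 2 - 10)

/-- `t` is the image of `X` in `R`, a square root of `10`;
it generates the maximal ideal `m` of the local ring `R`. -/
noncomputable abbrev t : R := AdjoinRoot.root _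

noncomputable abbrev C5 : ℤ_[5] →+* R := algebraMap _ _

lemma ht : t ^ 2 = 10 := by
  have h := AdjoinRoot.mk_self (f := (X : Polynomial ℤ_[5]) ^ 2 - 10)
  rw [map_sub, map_pow, AdjoinRoot.mk_X, map_ofNat, sub_eq_zero] at h
  exact h

lemma fpoly_eq : ((X : Polynomial ℤ_[5]) ^ 2 - 10) = X ^ 2 - Polynomial.C (10 : ℤ_[5]) := by
  rw [map_ofNat]

lemma fmonic : ((X : Polynomial ℤ_[5]) ^ 2 - 10).Monic := by
  rw [fpoly_eq]
  exact Polynomial.monic_X_pow_sub_C _ (by norm_num)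

lemma mk_C (a : ℤ_[5]) : AdjoinRoot.mk ((X : Polynomial ℤ_[5]) ^ 2 - 10) (Polynomial.C a) = C5 a := by
  rfl

lemma rep (z : R) : ∃ a b : ℤ_[5], z = C5 a + C5 b * t := by
  obtain ⟨p, rfl⟩ := AdjoinRoot.mk_surjective (g := (X : Polynomial ℤ_[5]) ^ 2 - 10) z
  set f : Polynomial ℤ_[5] := X ^ 2 - 10 with hf
  have hmod : AdjoinRoot.mk f p = AdjoinRoot.mk f (p %ₘ f) := by
    conv_lhs => rw [← Polynomial.modByMonic_add_div p f]
    rw [map_add, map_mul, AdjoinRoot.mk_self, zero_mul, add_zero]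
  have hdeg : (p %ₘ f).degree ≤ 1 := by
    have := Polynomial.degree_modByMonic_lt p fmonic
    have hdf : f.degree = 2 := by
      rw [hf, fpoly_eq]
      exact Polynomial.degree_X_pow_sub_C (by norm_num) _
    rw [hdf] at this
    exact Order.le_of_lt_succ (by exact_mod_cast this)
  refine ⟨(p %ₘ f).coeff 0, (p %ₘ f).coeff 1, ?_⟩
  rw [hmod]
  conv_lhs => rw [Polynomial.eq_X_add_C_of_degree_le_one hdeg]
  rw [map_add, map_mul, mk_C, mk_C, AdjoinRoot.mk_X, add_comm]

lemma rep_zero {a b : ℤ_[5]} (h : C5 a + C5 b * t = 0) : a = 0 ∧ b = 0 := by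
  set f : Polynomial ℤ_[5] := X ^ 2 - 10 with hf
  have h' : AdjoinRoot.mk f (Polynomial.C a + Polynomial.C b * X) = 0 := by
    rw [map_add, map_mul, mk_C, mk_C, AdjoinRoot.mk_X]; exact h
  rw [AdjoinRoot.mk_eq_zero] at h'
  have hzero : Polynomial.C a + Polynomial.C b * X = 0 := by
    by_contra hne
    have hd := Polynomial.degree_le_of_dvd h' hne
    have hdf : f.degree = 2 := by
      rw [hf, fpoly_eq]; exact Polynomial.degree_X_pow_sub_C (by norm_num) _
    have : (Polynomial.C a + Polynomial.C b * X).degree ≤ 1 := by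
      apply le_trans (Polynomial.degree_add_le _ _)
      simp only [sup_le_iff]
      constructor
      · exact le_trans (Polynomial.degree_C_le) (by norm_num)
      · exact le_trans (Polynomial.degree_mul_le _ _) (by
          simpa using add_le_add Polynomial.degree_C_le (le_refl (Polynomial.X : Polynomial ℤ_[5]).degree))
    rw [hdf] at hd
    exact absurd (le_trans hd this) (by norm_num)
  constructor
  · have := congrArg (fun p => Polynomial.coeff p 0) hzero
    simpa using this
  · have := congrArg (fun p => Polynomial.coeff p 1) hzero
    simpa using this

noncomputable abbrev It : Ideal R := Ideal.span {t}
noncomputable abbrev JR : Ideal R := Ideal.span {(5 : R)}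
noncomputable abbrev I5 : Ideal ℤ_[5] := Ideal.span {(5 : ℤ_[5])}

lemma isUnit_two : IsUnit (2 : ℤ_[5]) := by
  rw [PadicInt.isUnit_iff]
  have h1 : ‖(2 : ℤ_[5])‖ ≤ 1 := PadicInt.norm_le_one _
  have h2 : ¬ ‖((2 : ℤ) : ℤ_[5])‖ < 1 := by
    rw [PadicInt.norm_int_lt_one_iff_dvd]
    norm_num
  push_cast at h2
  linarith [lt_or_eq_of_le h1]

lemma exists_inv2 : ∃ v : ℤ_[5], 2 * v = 1 := isUnit_two.exists_right_inv

lemma five_mem_It_sq : (5 : R) ∈ It ^ 2 := by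
  obtain ⟨v, hv⟩ := exists_inv2
  rw [Ideal.span_singleton_pow, Ideal.mem_span_singleton']
  refine ⟨C5 v, ?_⟩
  rw [ht]
  calc C5 v * 10 = C5 v * C5 10 := by rw [map_ofNat]
    _ = C5 (v * 10) := by rw [map_mul]
    _ = C5 5 := by rw [show v * 10 = 5 by linear_combination 5 * hv]
    _ = 5 := by rw [map_ofNat]

lemma t_sq_mem_JR : t ^ 2 ∈ JR := by
  rw [ht, Ideal.mem_span_singleton']
  exact ⟨2, by norm_num⟩

lemma JR_pow_le (k : ℕ) : JR ^ k ≤ It ^ (2 * k) := by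
  have h1 : JR ≤ It ^ 2 := by
    rw [Ideal.span_le, Set.singleton_subset_iff]; exact five_mem_It_sq
  calc JR ^ k ≤ (It ^ 2) ^ k := Ideal.pow_right_mono h1 k
    _ = It ^ (2 * k) := by rw [← pow_mul]

lemma It_pow_le (k : ℕ) : It ^ (2 * k) ≤ JR ^ k := by
  have h1 : It ^ 2 ≤ JR := by
    rw [Ideal.span_singleton_pow, Ideal.span_le, Set.singleton_subset_iff]
    exact t_sq_mem_JR
  calc It ^ (2 * k) = (It ^ 2) ^ k := by rw [← pow_mul]
    _ ≤ JR ^ k := Ideal.pow_right_mono h1 k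

lemma coe_p_eq : ((5 : ℕ) : ℤ_[5]) = (5 : ℤ_[5]) := by norm_num

lemma max_eq : IsLocalRing.maximalIdeal ℤ_[5] = I5 := by
  rw [PadicInt.maximalIdeal_eq_span_p, coe_p_eq]

lemma fermat (c : ℤ_[5]) : c ^ 5 - c ∈ I5 := by
  have h : PadicInt.toZMod (c ^ 5 - c) = 0 := by
    rw [map_sub, map_pow, ZMod.pow_card, sub_self]
  have hk : c ^ 5 - c ∈ RingHom.ker (PadicInt.toZMod (p := 5)) := h
  rwa [PadicInt.ker_toZMod, max_eq] at hk

lemma z5_hausdorff (a : ℤ_[5]) (h : ∀ k, a ∈ I5 ^ k) : a = 0 := by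
  have inst : IsHausdorff (IsLocalRing.maximalIdeal ℤ_[5]) ℤ_[5] := inferInstance
  refine inst.haus' a (fun n => ?_)
  rw [SModEq.zero, smul_eq_mul, Ideal.mul_top, max_eq]
  exact h n

lemma z5_precomplete (A : ℕ → ℤ_[5]) (hA : ∀ k, A (k + 1) - A k ∈ I5 ^ k) :
    ∃ L : ℤ_[5], ∀ k, L - A k ∈ I5 ^ k := by
  have key : ∀ m n, m ≤ n → A n - A m ∈ I5 ^ m := by
    intro m n hmn
    induction n with
    | zero => simp_all
    | succ n ih =>
      rcases Nat.lt_or_ge m (n+1) with h' | h'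
      · have hmn' : m ≤ n := Nat.lt_succ_iff.mp h'
        have h1 := ih hmn'
        have h2 : A (n+1) - A n ∈ I5 ^ m :=
          Ideal.pow_le_pow_right hmn' (hA n)
        simpa using add_mem h2 h1
      · have : m = n + 1 := le_antisymm hmn h'
        subst this; simp
  have inst : IsPrecomplete (IsLocalRing.maximalIdeal ℤ_[5]) ℤ_[5] := inferInstance
  obtain ⟨L, hL⟩ := inst.prec' A (fun {m n} hmn => by
    rw [SModEq.sub_mem, smul_eq_mul, Ideal.mul_top, max_eq]
    simpa using neg_mem (key m n hmn))
  refine ⟨L, fun k => ?_⟩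
  have := hL k
  rw [SModEq.sub_mem, smul_eq_mul, Ideal.mul_top, max_eq] at this
  simpa using neg_mem this

lemma five_R_eq : (5 : R) = C5 (5 : ℤ_[5]) := (map_ofNat C5 5).symm

lemma mem_JR_pow {k : ℕ} {x : R} (hx : x ∈ JR ^ k) :
    ∃ a b : ℤ_[5], x = C5 (5 ^ k * a) + C5 (5 ^ k * b) * t := by
  rw [Ideal.span_singleton_pow, Ideal.mem_span_singleton'] at hx
  obtain ⟨c, hc⟩ := hx
  obtain ⟨a', b', hrep⟩ := rep c
  refine ⟨a', b', ?_⟩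
  rw [← hc, hrep]
  have h5 : (5 : R) ^ k = C5 ((5 : ℤ_[5]) ^ k) := by rw [map_pow, map_ofNat]
  rw [h5, map_mul, map_mul, map_pow, map_ofNat]
  ring

lemma mem_JR_pow_of {k : ℕ} {a b : ℤ_[5]} (ha : a ∈ I5 ^ k) (hb : b ∈ I5 ^ k) :
    C5 a + C5 b * t ∈ JR ^ k := by
  rw [Ideal.span_singleton_pow, Ideal.mem_span_singleton'] at ha hb ⊢
  obtain ⟨c, hc⟩ := ha
  obtain ⟨d, hd⟩ := hb
  refine ⟨C5 c + C5 d * t, ?_⟩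
  have h5 : (5 : R) ^ k = C5 ((5 : ℤ_[5]) ^ k) := by rw [map_pow, map_ofNat]
  rw [h5, ← hc, ← hd, map_mul, map_mul, map_pow, map_ofNat]
  ring

lemma R_hausdorff (x : R) (h : ∀ k, x ∈ JR ^ k) : x = 0 := by
  obtain ⟨a, b, hx⟩ := rep x
  have key : ∀ k, a ∈ I5 ^ k ∧ b ∈ I5 ^ k := by
    intro k
    obtain ⟨ak, bk, hk⟩ := mem_JR_pow (h k)
    have hz : C5 (a - 5 ^ k * ak) + C5 (b - 5 ^ k * bk) * t = 0 := by
      rw [map_sub, map_sub]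
      have h0 : (C5 a + C5 b * t) - (C5 (5 ^ k * ak) + C5 (5 ^ k * bk) * t) = 0 := by
        rw [← hx, ← hk]; ring
      linear_combination h0
    obtain ⟨ha, hb⟩ := rep_zero hz
    rw [sub_eq_zero] at ha hb
    constructor
    · rw [Ideal.span_singleton_pow, Ideal.mem_span_singleton', ha]
      exact ⟨ak, by ring⟩
    · rw [Ideal.span_singleton_pow, Ideal.mem_span_singleton', hb]
      exact ⟨bk, by ring⟩
  have ha : a = 0 := z5_hausdorff a (fun k => (key k).1)
  have hb : b = 0 := z5_hausdorff b (fun k => (key k).2)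
  rw [hx, ha, hb]
  simp

lemma R_complete (f : ℕ → R) (hf : ∀ k, f (k + 1) - f k ∈ JR ^ k) :
    ∃ L : R, ∀ k, L - f k ∈ JR ^ k := by
  choose a b hab using fun k => mem_JR_pow (hf k)
  set A : ℕ → ℤ_[5] := fun k => ∑ j ∈ Finset.range k, 5 ^ j * a j with hA
  set B : ℕ → ℤ_[5] := fun k => ∑ j ∈ Finset.range k, 5 ^ j * b j with hB
  have hfk : ∀ k, f k = f 0 + C5 (A k) + C5 (B k) * t := by
    intro k
    induction k with
    | zero => simp [hA, hB]
    | succ n ih =>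
      have := hab n
      have hstep : f (n + 1) = f n + (C5 (5 ^ n * a n) + C5 (5 ^ n * b n) * t) := by
        rw [← this]; ring
      rw [hstep, ih, hA, hB]
      simp only [Finset.sum_range_succ, map_add]
      ring
  have hAmem : ∀ k, A (k + 1) - A k ∈ I5 ^ k := by
    intro k
    rw [Ideal.span_singleton_pow, Ideal.mem_span_singleton']
    refine ⟨a k, ?_⟩
    simp [hA, Finset.sum_range_succ]
    ring
  have hBmem : ∀ k, B (k + 1) - B k ∈ I5 ^ k := by
    intro k
    rw [Ideal.span_singleton_pow, Ideal.mem_span_singleton']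
    refine ⟨b k, ?_⟩
    simp [hB, Finset.sum_range_succ]
    ring
  obtain ⟨La, hLa⟩ := z5_precomplete A hAmem
  obtain ⟨Lb, hLb⟩ := z5_precomplete B hBmem
  refine ⟨f 0 + C5 La + C5 Lb * t, fun k => ?_⟩
  have : f 0 + C5 La + C5 Lb * t - f k = C5 (La - A k) + C5 (Lb - B k) * t := by
    rw [hfk k, map_sub, map_sub]; ring
  rw [this]
  exact mem_JR_pow_of (hLa k) (hLb k)

noncomputable def Fmap (a b : R) : R := 2 * a - (2 * b ^ 2 * t + 2 * (b ^ 3 + b ^ 5) * t ^ 2 + b ^ 4 * t ^ 3)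

lemma Fmap_contract (a : R) {b1 b2 : R} {n : ℕ} (h : b1 - b2 ∈ It ^ n) :
    Fmap a b1 - Fmap a b2 ∈ It ^ (n + 1) := by
  have key : Fmap a b1 - Fmap a b2 = -((b1 - b2) * t *
      (2 * (b1 + b2) + 2 * (b1 ^ 2 + b1 * b2 + b2 ^ 2 + b1 ^ 4 + b1 ^ 3 * b2 + b1 ^ 2 * b2 ^ 2 + b1 * b2 ^ 3 + b2 ^ 4) * t +
        (b1 ^ 3 + b1 ^ 2 * b2 + b1 * b2 ^ 2 + b2 ^ 3) * t ^ 2)) := by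
    unfold Fmap; ring
  rw [key]
  apply neg_mem
  apply Ideal.mul_mem_right
  have h2 : (b1 - b2) * t ∈ It ^ n * It :=
    Ideal.mul_mem_mul h (Ideal.mem_span_singleton_self t)
  rwa [← pow_succ] at h2

noncomputable def bseq (a : R) : ℕ → R
  | 0 => 0
  | n + 1 => Fmap a (bseq a n)

lemma bseq_diff (a : R) : ∀ n, bseq a (n + 1) - bseq a n ∈ It ^ n := by
  intro n
  induction n with
  | zero => simp
  | succ n ih => exact Fmap_contract a ih

lemma exists_fixed (a : R) : ∃ L : R, L = Fmap a L := by
  set g : ℕ → R := fun k => bseq a (2 * k) with hg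
  have hgd : ∀ k, g (k + 1) - g k ∈ JR ^ k := by
    intro k
    apply It_pow_le k
    have h1 : bseq a (2 * k + 2) - bseq a (2 * k + 1) ∈ It ^ (2 * k) :=
      Ideal.pow_le_pow_right (by omega) (bseq_diff a (2 * k + 1))
    have h2 : bseq a (2 * k + 1) - bseq a (2 * k) ∈ It ^ (2 * k) := bseq_diff a (2 * k)
    have := add_mem h1 h2
    simpa [hg, show 2 * (k + 1) = 2 * k + 2 by ring] using this
  obtain ⟨L, hL⟩ := R_complete g hgd
  refine ⟨L, ?_⟩
  have key : ∀ k, L - Fmap a L ∈ JR ^ k := by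
    intro k
    have h1 : L - bseq a (2 * k + 1) ∈ JR ^ k := by
      have := sub_mem (hL k) ((It_pow_le k) (bseq_diff a (2 * k)))
      simpa [hg] using this
    have h2 : Fmap a (bseq a (2 * k)) - Fmap a L ∈ JR ^ k := by
      apply It_pow_le k
      apply Ideal.pow_le_pow_right (by omega : 2 * k ≤ 2 * k + 1)
      apply Fmap_contract
      exact (JR_pow_le k) (by simpa using neg_mem (hL k))
    have := add_mem h1 h2
    simpa [bseq] using this
  exact sub_eq_zero.mp (R_hausdorff _ key)

lemma It_pow_le_self {m n : ℕ} (h : m ≤ n) : It ^ n ≤ It ^ m := Ideal.pow_le_pow_right h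

theorem stmt_10 (u : R) (hu : u - 1 ∈ Ideal.span {t}) :
    (∃ y : R, y ^ 5 = u) ↔ u - 1 ∈ Ideal.span {t} ^ 3 := by
  constructor
  · rintro ⟨y, rfl⟩
    -- forward: y^5 ≡ 1 mod t implies y ≡ 1 mod t, then expand
    obtain ⟨c, d, hy⟩ := rep y
    have h1 : y - C5 c ∈ It := by
      rw [hy]
      simpa using Ideal.mul_mem_left _ (C5 d) (Ideal.mem_span_singleton_self t)
    have h2 : y ^ 5 - (C5 c) ^ 5 ∈ It := by
      have : y ^ 5 - (C5 c) ^ 5 = (y - C5 c) * (y ^ 4 + y ^ 3 * C5 c + y ^ 2 * (C5 c) ^ 2 + y * (C5 c) ^ 3 + (C5 c) ^ 4) := by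
        ring
      rw [this]
      exact Ideal.mul_mem_right _ _ h1
    have h3 : (C5 c) ^ 5 - C5 c ∈ It := by
      have hmem := fermat c
      rw [Ideal.mem_span_singleton'] at hmem
      obtain ⟨e, he⟩ := hmem
      have : (C5 c) ^ 5 - C5 c = C5 e * (5 : R) := by
        rw [five_R_eq, ← map_pow, ← map_mul, ← map_sub, ← he]
      rw [this]
      exact Ideal.mul_mem_left _ _ ((Ideal.pow_le_self (two_ne_zero)) five_mem_It_sq)
    have hy1 : y - 1 ∈ It := by
      have : y - 1 = (y - C5 c) - ((C5 c) ^ 5 - C5 c) + ((C5 c) ^ 5 - y ^ 5) + (y ^ 5 - 1) := by ring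
      rw [this]
      exact add_mem (add_mem (sub_mem h1 h3) (neg_mem h2 |> fun _ => by simpa using neg_mem h2)) hu
    set s := y - 1 with hs
    have key : y ^ 5 - 1 = 5 * s + 10 * s ^ 2 + 10 * s ^ 3 + 5 * s ^ 4 + s ^ 5 := by
      rw [hs]; ring
    rw [key]
    have m1 : (5 : R) * s ∈ It ^ 3 := by
      have := Ideal.mul_mem_mul five_mem_It_sq hy1
      rwa [← pow_succ] at this
    have m10 : (10 : R) ∈ It ^ 2 := by
      rw [← ht]
      exact Ideal.pow_mem_pow (Ideal.mem_span_singleton_self t) 2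
    have m2 : (10 : R) * s ^ 2 ∈ It ^ 3 := by
      have h' : (10 : R) * s ∈ It ^ 3 := by
        have := Ideal.mul_mem_mul m10 hy1
        rwa [← pow_succ] at this
      have : (10 : R) * s ^ 2 = ((10 : R) * s) * s := by ring
      rw [this]
      exact Ideal.mul_mem_right _ _ h'
    have m3 : (10 : R) * s ^ 3 ∈ It ^ 3 := by
      have : (10 : R) * s ^ 3 = ((10 : R) * s) * s ^ 2 := by ring
      rw [this]
      apply Ideal.mul_mem_right
      have := Ideal.mul_mem_mul m10 hy1
      rwa [← pow_succ] at this
    have m4 : (5 : R) * s ^ 4 ∈ It ^ 3 := by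
      have : (5 : R) * s ^ 4 = ((5 : R) * s) * s ^ 3 := by ring
      rw [this]
      exact Ideal.mul_mem_right _ _ m1
    have m5 : s ^ 5 ∈ It ^ 3 := by
      have : s ^ 5 = s ^ 3 * s ^ 2 := by ring
      rw [this]
      exact Ideal.mul_mem_right _ _ (Ideal.pow_mem_pow hy1 3)
    exact add_mem (add_mem (add_mem (add_mem m1 m2) m3) m4) m5
  · intro h3
    rw [show (Ideal.span {t} : Ideal R) ^ 3 = Ideal.span {t ^ 3} from Ideal.span_singleton_pow t 3,
      Ideal.mem_span_singleton'] at h3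
    obtain ⟨c, hc⟩ := h3
    obtain ⟨L, hL⟩ := exists_fixed c
    refine ⟨1 + L * t, ?_⟩
    have hb : L + 2 * L ^ 2 * t + 2 * (L ^ 3 + L ^ 5) * t ^ 2 + L ^ 4 * t ^ 3 = 2 * c := by
      unfold Fmap at hL
      linear_combination hL
    have h2u : (2 : R) * (1 + L * t) ^ 5 = 2 * u := by
      have hueq : u = 1 + c * t ^ 3 := by linear_combination -hc
      rw [hueq]
      linear_combination t ^ 3 * hb + (-(L * t) - 2 * L ^ 2 * t ^ 2 - 2 * L ^ 3 * t ^ 3 - L ^ 4 * t ^ 4) * ht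
    have hu2 : IsUnit (2 : R) := by
      have := isUnit_two.map C5
      rwa [show C5 (2 : ℤ_[5]) = (2 : R) from map_ofNat C5 2] at this
    exact hu2.mul_left_cancel h2u
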